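/- Let A, B, C be real matrices of sizes n×n, n×m, l×n respectively, P a symmetric positive definite n×n matrix, and Q ∈ Sˡ, S ∈ ℝˡˣᵐ, R ∈ Sᵐ. Suppose the block matrix [[AᵀP + PA − CᵀQC, PB − CᵀS], [BᵀP − SᵀC, −R]] is negative semidefinite. Then for the LTI system ẋ = Ax + Bu, y = Cx with x(0) = x₀, and for every T > 0 and every input u, the dissipation inequality ∫₀ᵀ (yᵀQy + 2yᵀSu + uᵀRu) dt ≥ −x₀ᵀPx₀ holds. -/

import Mathlib

open Matrix MeasureTheory


private lemma quadform_hasDerivAt {n : ℕ} (P : Matrix (Fin n) (Fin n) ℝ)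
    (x x' : ℝ → Fin n → ℝ) (t : ℝ) (hode : ∀ t, HasDerivAt x (x' t) t) :
    HasDerivAt (fun s => x s ⬝ᵥ P *ᵥ x s) (x' t ⬝ᵥ P *ᵥ x t + x t ⬝ᵥ P *ᵥ x' t) t := by
  have hxi : ∀ i t, HasDerivAt (fun s => x s i) (x' t i) t := fun i t =>
    ((ContinuousLinearMap.proj (R := ℝ) (φ := fun _ : Fin n => ℝ) i).hasFDerivAt).comp_hasDerivAt
      t (hode t)
  have key : HasDerivAt (fun s => ∑ i, ∑ j, x s i * (P i j * x s j))
      (∑ i, ∑ j, (x' t i * (P i j * x t j) + x t i * (P i j * x' t j))) t := by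
    refine HasDerivAt.fun_sum fun i _ => HasDerivAt.fun_sum fun j _ => ?_
    exact (hxi i t).mul ((hxi j t).const_mul (P i j))
  convert key using 1
  · ext s; simp [dotProduct, mulVec, Finset.mul_sum]
  · simp [dotProduct, mulVec, Finset.mul_sum, Finset.sum_add_distrib, mul_add]

/-- QSR dissipativity of an LTI system from the KYP-type LMI: if
`[[AᵀP + PA − CᵀQC, PB − CᵀS],[BᵀP − SᵀC, −R]] ⪯ 0` with `P ≻ 0`, then along any
trajectory of `ẋ = Ax + Bu`, `y = Cx`, `x(0) = x₀`, the dissipation inequality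
`∫₀ᵀ (yᵀQy + 2yᵀSu + uᵀRu) dt ≥ −x₀ᵀPx₀` holds for every `T > 0`. -/
theorem stmt_3 {n m l : ℕ}
    (A : Matrix (Fin n) (Fin n) ℝ) (B : Matrix (Fin n) (Fin m) ℝ)
    (C : Matrix (Fin l) (Fin n) ℝ)
    (P : Matrix (Fin n) (Fin n) ℝ) (Q : Matrix (Fin l) (Fin l) ℝ)
    (S : Matrix (Fin l) (Fin m) ℝ) (R : Matrix (Fin m) (Fin m) ℝ)
    (hP : P.IsSymm) (hPpd : P.PosDef) (hQ : Q.IsSymm) (hR : R.IsSymm)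
    (hLMI : (-(fromBlocks (Aᵀ * P + P * A - Cᵀ * Q * C) (P * B - Cᵀ * S)
        (Bᵀ * P - Sᵀ * C) (-R))).PosSemidef)
    (x : ℝ → (Fin n → ℝ)) (u : ℝ → (Fin m → ℝ)) (x₀ : Fin n → ℝ)
    (hx0 : x 0 = x₀)
    (hode : ∀ t, HasDerivAt x (A.mulVec (x t) + B.mulVec (u t)) t)
    (T : ℝ) (hT : 0 < T) :
    (∫ t in (0:ℝ)..T,
        ((C.mulVec (x t)) ⬝ᵥ Q.mulVec (C.mulVec (x t))
          + 2 * ((C.mulVec (x t)) ⬝ᵥ S.mulVec (u t))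
          + (u t) ⬝ᵥ R.mulVec (u t))) ≥ -(x₀ ⬝ᵥ P.mulVec x₀) := by
  -- storage function, supply rate, and derivative of the storage
  set φ : ℝ → ℝ := fun t =>
    ((C.mulVec (x t)) ⬝ᵥ Q.mulVec (C.mulVec (x t))
      + 2 * ((C.mulVec (x t)) ⬝ᵥ S.mulVec (u t))
      + (u t) ⬝ᵥ R.mulVec (u t)) with hφ
  set V : ℝ → ℝ := fun t => x t ⬝ᵥ P *ᵥ x t with hV
  set g : ℝ → ℝ := fun t =>
    (A *ᵥ x t + B *ᵥ u t) ⬝ᵥ P *ᵥ x t + x t ⬝ᵥ P *ᵥ (A *ᵥ x t + B *ᵥ u t) with hg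
  -- V has derivative g everywhere
  have hVd : ∀ t, HasDerivAt V (g t) t := fun t =>
    quadform_hasDerivAt P x (fun s => A *ᵥ x s + B *ᵥ u s) t hode
  -- pointwise dissipation inequality from the LMI
  have hpt : ∀ t, g t ≤ φ t := by
    intro t
    have h0 := hLMI.dotProduct_mulVec_nonneg (Sum.elim (x t) (u t))
    have hid : Sum.elim (x t) (u t) ⬝ᵥ
        (-(fromBlocks (Aᵀ * P + P * A - Cᵀ * Q * C) (P * B - Cᵀ * S)
          (Bᵀ * P - Sᵀ * C) (-R))) *ᵥ Sum.elim (x t) (u t) = φ t - g t := by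
      have hPs : ∀ w z : Fin n → ℝ, w ⬝ᵥ P *ᵥ z = (P *ᵥ w) ⬝ᵥ z := by
        intro w z; rw [Matrix.dotProduct_mulVec, ← Matrix.vecMul_transpose, hP.eq]
      simp only [hφ, hg, Matrix.neg_mulVec, fromBlocks_mulVec, dotProduct_neg,
        sumElim_dotProduct_sumElim, Matrix.add_mulVec, Matrix.sub_mulVec, Matrix.neg_mulVec,
        ← Matrix.mulVec_mulVec, dotProduct_add, dotProduct_sub, dotProduct_neg,
        add_dotProduct, Matrix.mulVec_add, Sum.elim_comp_inl, Sum.elim_comp_inr]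
      rw [show x t ⬝ᵥ Aᵀ *ᵥ (P *ᵥ x t) = (A *ᵥ x t) ⬝ᵥ (P *ᵥ x t) by
            rw [Matrix.dotProduct_mulVec, Matrix.vecMul_transpose],
          show x t ⬝ᵥ Cᵀ *ᵥ (Q *ᵥ (C *ᵥ x t)) = (C *ᵥ x t) ⬝ᵥ (Q *ᵥ (C *ᵥ x t)) by
            rw [Matrix.dotProduct_mulVec, Matrix.vecMul_transpose],
          show x t ⬝ᵥ Cᵀ *ᵥ (S *ᵥ u t) = (C *ᵥ x t) ⬝ᵥ (S *ᵥ u t) by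
            rw [Matrix.dotProduct_mulVec, Matrix.vecMul_transpose],
          show u t ⬝ᵥ Bᵀ *ᵥ (P *ᵥ x t) = (B *ᵥ u t) ⬝ᵥ (P *ᵥ x t) by
            rw [Matrix.dotProduct_mulVec, Matrix.vecMul_transpose],
          show u t ⬝ᵥ Sᵀ *ᵥ (C *ᵥ x t) = (C *ᵥ x t) ⬝ᵥ (S *ᵥ u t) by
            rw [Matrix.dotProduct_mulVec, Matrix.vecMul_transpose, dotProduct_comm],
          hPs (x t) (A *ᵥ x t), hPs (x t) (B *ᵥ u t)]
      rw [dotProduct_comm (P *ᵥ x t) (A *ᵥ x t), dotProduct_comm (P *ᵥ x t) (B *ᵥ u t)]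
      ring
    have : (0 : ℝ) ≤ φ t - g t := by
      rw [← hid]; simpa using h0
    linarith
  -- nonnegativity of the storage
  have hVnn : ∀ t, 0 ≤ V t := fun t => by
    simpa using hPpd.posSemidef.dotProduct_mulVec_nonneg (x t)
  have hV0 : V 0 = x₀ ⬝ᵥ P.mulVec x₀ := by simp [hV, hx0]
  by_cases hint : IntegrableOn φ (Set.Icc 0 T) volume
  · have hle : V T - V 0 ≤ ∫ t in (0:ℝ)..T, φ t := by
      refine intervalIntegral.sub_le_integral_of_hasDeriv_right_of_le hT.le
        (fun t _ => (hVd t).continuousAt.continuousWithinAt)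
        (fun t _ => ((hVd t).hasDerivWithinAt)) hint (fun t _ => hpt t)
    have : -(x₀ ⬝ᵥ P.mulVec x₀) = -V 0 := by rw [hV0]
    rw [ge_iff_le, this]
    have := hVnn T
    calc -V 0 ≤ V T - V 0 := by linarith
      _ ≤ _ := hle
  · have hni : ¬ IntervalIntegrable φ volume 0 T := by
      rw [intervalIntegrable_iff_integrableOn_Icc_of_le hT.le]
      exact hint
    rw [ge_iff_le, intervalIntegral.integral_undef hni]
    have : 0 ≤ x₀ ⬝ᵥ P.mulVec x₀ := by rw [← hV0]; exact hVnn 0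
    linarith
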